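/- Let (Ω, μ) be a finite measure space with normalized expectation E, and let U ≥ 0 be measurable with E[U] = 1 and E[U³] < ∞. Then cov(U², U) ≥ (1/2)·var(U)², with equality if and only if U = 1 almost everywhere. -/

import Mathlib

open MeasureTheory Real Set

/-- Weak First Law of Natural Selection: `cov(U²,U) = E[U²(U−1)] ≥ (1/2)·var(U)²`,
with equality iff `U = 1` almost everywhere (purely environmental case). -/
theorem weak_first_law
    {Ω : Type*} [MeasurableSpace Ω] (μ : Measure Ω) [IsFiniteMeasure μ]
    (hN : 0 < (μ univ).toReal)
    (U : Ω → ℝ) (hUm : Measurable U) (hU0 : ∀ x, 0 ≤ U x)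
    (hU1 : (∫ x, U x ∂μ) / (μ univ).toReal = 1)
    (hU2 : Integrable (fun x => (U x) ^ 2) μ)
    (hU3 : Integrable (fun x => (U x) ^ 3) μ) :
    let N := (μ univ).toReal
    let v := (∫ x, (U x) ^ 2 ∂μ) / N - 1
    let c := (∫ x, (U x) ^ 2 * (U x - 1) ∂μ) / N
    c ≥ (1 / 2) * v ^ 2 ∧
      (c = (1 / 2) * v ^ 2 ↔ ∀ᵐ x ∂μ, U x = 1) := by
  intro N v c
  have hNdef : N = (μ univ).toReal := rfl
  have hNne : N ≠ 0 := ne_of_gt hN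
  -- U is integrable
  have hUint : Integrable U μ := by
    refine ((integrable_const (1:ℝ)).add hU2).mono' hUm.aestronglyMeasurable ?_
    filter_upwards with x
    have h0 := hU0 x
    simp only [Real.norm_eq_abs, abs_of_nonneg h0, Pi.add_apply]
    nlinarith [sq_nonneg (U x - 1)]
  -- ∫ U = N
  have hI1 : (∫ x, U x ∂μ) = N := by
    rw [div_eq_one_iff_eq hNne] at hU1
    exact hU1
  -- the key nonnegative integrand
  set g : Ω → ℝ := fun x => (U x + 1) * (U x - 1 - v / 2) ^ 2 with hg
  have hgfun : g = fun x => (U x)^3 + (-1 - 2*(v/2)) * (U x)^2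
      + ((1+v/2)^2 - 2*(1+v/2)) * (U x) + (1+v/2)^2 := by
    funext x; simp only [hg]; ring
  have hg_int : Integrable g μ := by
    rw [hgfun]
    exact ((hU3.add (hU2.const_mul _)).add (hUint.const_mul _)).add (integrable_const _)
  have h2a : Integrable (fun x => (-1 - 2*(v/2)) * (U x)^2) μ := hU2.const_mul _
  have h1a : Integrable (fun x => ((1+v/2)^2 - 2*(1+v/2)) * (U x)) μ := hUint.const_mul _
  have key : (∫ x, g x ∂μ)
      = (∫ x, (U x)^3 ∂μ) + (-1 - 2*(v/2)) * (∫ x, (U x)^2 ∂μ)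
        + ((1+v/2)^2 - 2*(1+v/2)) * (∫ x, U x ∂μ) + (1+v/2)^2 * N := by
    have c1 : (∫ x, g x ∂μ) = ∫ x, ((U x)^3 + (-1 - 2*(v/2)) * (U x)^2
        + ((1+v/2)^2 - 2*(1+v/2)) * (U x)) + (1+v/2)^2 ∂μ := by
      refine integral_congr_ae (Filter.Eventually.of_forall fun x => ?_)
      simp only [hg]; ring
    have c2 : (∫ x, ((U x)^3 + (-1 - 2*(v/2)) * (U x)^2
        + ((1+v/2)^2 - 2*(1+v/2)) * (U x)) + (1+v/2)^2 ∂μ)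
        = (∫ x, (U x)^3 + (-1 - 2*(v/2)) * (U x)^2
            + ((1+v/2)^2 - 2*(1+v/2)) * (U x) ∂μ) + ∫ _x, ((1+v/2)^2 : ℝ) ∂μ :=
      integral_add ((hU3.add h2a).add h1a) (integrable_const _)
    have c3 : (∫ x, (U x)^3 + (-1 - 2*(v/2)) * (U x)^2
            + ((1+v/2)^2 - 2*(1+v/2)) * (U x) ∂μ)
        = (∫ x, (U x)^3 + (-1 - 2*(v/2)) * (U x)^2 ∂μ)
          + ∫ x, ((1+v/2)^2 - 2*(1+v/2)) * (U x) ∂μ :=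
      integral_add (hU3.add h2a) h1a
    have c4 : (∫ x, (U x)^3 + (-1 - 2*(v/2)) * (U x)^2 ∂μ)
        = (∫ x, (U x)^3 ∂μ) + ∫ x, (-1 - 2*(v/2)) * (U x)^2 ∂μ :=
      integral_add hU3 h2a
    rw [c1, c2, c3, c4, integral_const_mul, integral_const_mul, integral_const]
    simp only [smul_eq_mul, Measure.real, ← hNdef]
    ring
  -- c * N = I3 - I2
  have hsplit : (∫ x, (U x)^2 * (U x - 1) ∂μ)
      = (∫ x, (U x)^3 ∂μ) - (∫ x, (U x)^2 ∂μ) := by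
    rw [← integral_sub hU3 hU2]
    congr 1; funext x; ring
  have hcN : c * N = (∫ x, (U x)^3 ∂μ) - (∫ x, (U x)^2 ∂μ) := by
    have : c * N = (∫ x, (U x)^2 * (U x - 1) ∂μ) := by
      show ((∫ x, (U x)^2 * (U x - 1) ∂μ) / N) * N = _
      field_simp
    rw [this, hsplit]
  have hvN : v * N = (∫ x, (U x)^2 ∂μ) - N := by
    show ((∫ x, (U x)^2 ∂μ) / N - 1) * N = _
    field_simp
  -- ∫ g = N * (c - v²/2)
  have hEq : (∫ x, g x ∂μ) = N * (c - (1/2) * v^2) := by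
    rw [hI1] at key
    linear_combination key - hcN + v * hvN
  have hg0 : 0 ≤ ∫ x, g x ∂μ := by
    refine integral_nonneg fun x => ?_
    have := hU0 x
    exact mul_nonneg (by linarith) (sq_nonneg _)
  constructor
  · nlinarith [hg0, hEq]
  constructor
  · -- equality ⇒ U = 1 a.e.
    intro hceq
    have hint0 : (∫ x, g x ∂μ) = 0 := by rw [hEq, hceq]; ring
    have hgnn : 0 ≤ g := fun x => mul_nonneg (by linarith [hU0 x]) (sq_nonneg _)
    have hae : g =ᵐ[μ] 0 := (integral_eq_zero_iff_of_nonneg hgnn hg_int).mp hint0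
    have hUc : ∀ᵐ x ∂μ, U x = 1 + v / 2 := by
      filter_upwards [hae] with x hx
      simp only [hg, Pi.zero_apply] at hx
      have hpos : 0 < U x + 1 := by linarith [hU0 x]
      have := mul_eq_zero.mp hx
      rcases this with h | h
      · exact absurd h (ne_of_gt hpos)
      · have := pow_eq_zero_iff (n := 2) (by norm_num) |>.mp h
        linarith
    have hIU : (∫ x, U x ∂μ) = (1 + v/2) * N := by
      rw [integral_congr_ae hUc, integral_const, hNdef]
      simp [mul_comm, Measure.real]
    have hv0 : v = 0 := by
      rw [hI1] at hIU
      have : v / 2 * N = 0 := by linarith [hIU]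
      rcases mul_eq_zero.mp this with h | h
      · linear_combination 2 * h
      · exact absurd h hNne
    filter_upwards [hUc] with x hx
    rw [hv0] at hx; linarith
  · -- U = 1 a.e. ⇒ equality
    intro hU
    have hI2 : (∫ x, (U x)^2 ∂μ) = N := by
      have : (fun x => (U x)^2) =ᵐ[μ] fun _ => (1:ℝ) := by
        filter_upwards [hU] with x hx; rw [hx]; norm_num
      rw [integral_congr_ae this, integral_const, hNdef]; simp [Measure.real]
    have hIc : (∫ x, (U x)^2 * (U x - 1) ∂μ) = 0 := by
      have : (fun x => (U x)^2 * (U x - 1)) =ᵐ[μ] fun _ => (0:ℝ) := by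
        filter_upwards [hU] with x hx; rw [hx]; ring
      rw [integral_congr_ae this, integral_const]; simp
    have hv0 : v = 0 := by show (∫ x, (U x)^2 ∂μ)/N - 1 = 0; rw [hI2]; field_simp; norm_num
    have hc0 : c = 0 := by show (∫ x, (U x)^2 * (U x - 1) ∂μ)/N = 0; rw [hIc]; simp
    rw [hv0, hc0]; ring
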